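/- Let m, n : ℕ, let f : EuclideanSpace ℝ (Fin m) → ℝ be differentiable, let W : Matrix (Fin m) (Fin n) ℝ and b ∈ EuclideanSpace ℝ (Fin m), and let x, x' ∈ EuclideanSpace ℝ (Fin n). Suppose: (i) ∇f(W.mulVec x + b) = ∇f(W.mulVec x' + b) (the gradients with respect to the bias coincide); (ii) this common gradient vector is nonzero; and (iii) vecMulVec (∇f(W.mulVec x + b)) x = vecMulVec (∇f(W.mulVec x' + b)) x' (the gradients with respect to the weight matrix of the fully connected layer coincide). Then x = x'. Equivalently, for any x ≠ x' at which hypothesis (ii) holds, the gradients of the loss with respect to the layer parameters at inputs x and x' cannot all coincide. -/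

import Mathlib

/-- Core of Theorem 1: for a fully connected layer `y = Wx + b` with differentiable
scalar loss `f`, if the gradients of the loss w.r.t. the bias coincide at inputs
`x` and `x'`, this common gradient is nonzero, and the gradients w.r.t. the weight
matrix (the outer products `vecMulVec ∇f(Wx+b) x`) also coincide, then `x = x'`. -/
theorem fc_layer_gradients_determine_input (m n : ℕ)
    (f : EuclideanSpace ℝ (Fin m) → ℝ) (hf : Differentiable ℝ f)
    (W : Matrix (Fin m) (Fin n) ℝ) (b : EuclideanSpace ℝ (Fin m))
    (x x' : EuclideanSpace ℝ (Fin n))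
    (h1 : gradient f ((WithLp.equiv 2 _).symm (W.mulVec x) + b) =
          gradient f ((WithLp.equiv 2 _).symm (W.mulVec x') + b))
    (h2 : gradient f ((WithLp.equiv 2 _).symm (W.mulVec x) + b) ≠ 0)
    (h3 : Matrix.vecMulVec
            (WithLp.equiv 2 _ (gradient f ((WithLp.equiv 2 _).symm (W.mulVec x) + b)))
            (WithLp.equiv 2 _ x) =
          Matrix.vecMulVec
            (WithLp.equiv 2 _ (gradient f ((WithLp.equiv 2 _).symm (W.mulVec x') + b)))
            (WithLp.equiv 2 _ x')) :
    x = x' := by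
  set g := gradient f ((WithLp.equiv 2 _).symm (W.mulVec x) + b) with hg
  rw [← h1] at h3
  obtain ⟨i, hi⟩ : ∃ i, g i ≠ 0 := by
    by_contra h
    push_neg at h
    exact h2 (by ext k; simpa using h k)
  ext j
  have := congrFun (congrFun h3 i) j
  simp only [Matrix.vecMulVec_apply] at this
  exact mul_left_cancel₀ hi this
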